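/- Let X be a length space, p ∈ X, and R > 0, ε > 0. For any two points q₁, q₂ in the closed ball B(p,R), the distance between q₁ and q₂ in the metric of X equals their distance in the intrinsic (induced length) metric of the closed ball B(p, 2R+ε). In particular, the restricted metric on B(p,R) from X coincides with the intrinsic metric of B(p,2R+ε) restricted to B(p,R). -/

import Mathlib

open Metric Set

/-- The length of a path, as the extended-real total variation of the map. -/
noncomputable def pathLength {X : Type*} [PseudoMetricSpace X] {x y : X} (γ : Path x y) :
    ENNReal :=
  eVariationOn (fun t => γ t) Set.univ

/-- The induced (intrinsic) length pseudo-distance on a subset `A` of a metric space: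
the infimum of lengths of continuous paths joining the two points and staying inside `A`. -/
noncomputable def intrinsicEDist {X : Type*} [PseudoMetricSpace X] (A : Set X) (x y : X) :
    ENNReal :=
  ⨅ (γ : Path x y) (_ : Set.range (fun t => γ t) ⊆ A), pathLength γ

/-- A metric space is a length space if its distance is the induced length metric. -/
def IsLengthSpace (X : Type*) [PseudoMetricSpace X] : Prop :=
  ∀ x y : X, edist x y = intrinsicEDist Set.univ x y

/-- In a length space `X`, for `p ∈ X`, `R > 0`, `ε > 0`, the distance
between any two points of the closed ball `B(p,R)` in the metric of `X` equals their
distance in the intrinsic (induced length) metric of the closed ball `B(p, 2R+ε)`. -/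
theorem restricted_eq_intrinsic_on_smaller_ball
    {X : Type*} [MetricSpace X] (hX : IsLengthSpace X)
    (p : X) (R ε : ℝ) (hR : 0 < R) (hε : 0 < ε)
    (q₁ q₂ : X) (h₁ : q₁ ∈ Metric.closedBall p R) (h₂ : q₂ ∈ Metric.closedBall p R) :
    edist q₁ q₂ = intrinsicEDist (Metric.closedBall p (2 * R + ε)) q₁ q₂ := by
  have hRe : (0:ℝ) ≤ 2 * R + ε := by linarith
  apply le_antisymm
  · -- every path has length at least edist of endpoints
    refine le_iInf fun γ => le_iInf fun _ => ?_
    have := eVariationOn.edist_le (fun t => γ t) (Set.mem_univ (0 : unitInterval))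
      (Set.mem_univ (1 : unitInterval))
    simpa [pathLength] using this
  · apply ENNReal.le_of_forall_pos_le_add
    intro δ hδ _
    set δ' : ENNReal := min (δ : ENNReal) (ENNReal.ofReal ε) with hδ'def
    have hδ'pos : 0 < δ' := lt_min (by exact_mod_cast hδ) (by simpa using hε)
    have hfin : edist q₁ q₂ < ⊤ := edist_lt_top _ _
    have hEq : edist q₁ q₂ = ⨅ γ : Path q₁ q₂, pathLength γ := by
      rw [hX q₁ q₂, intrinsicEDist]
      exact iInf_congr fun γ => iInf_pos (Set.subset_univ _)
    have hlt : (⨅ γ : Path q₁ q₂, pathLength γ) < edist q₁ q₂ + δ' := by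
      rw [← hEq]
      exact ENNReal.lt_add_right hfin.ne hδ'pos.ne'
    obtain ⟨γ, hγ⟩ := iInf_lt_iff.1 hlt
    -- bound on edist q₁ q₂
    have hq12 : edist q₁ q₂ ≤ ENNReal.ofReal (2 * R) := by
      calc edist q₁ q₂ ≤ edist q₁ p + edist p q₂ := edist_triangle _ _ _
        _ ≤ ENNReal.ofReal R + ENNReal.ofReal R := by
            gcongr
            · exact (edist_le_ofReal hR.le).2 h₁
            · exact (edist_le_ofReal hR.le).2 (by simpa [dist_comm] using h₂)
        _ = ENNReal.ofReal (2 * R) := by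
            rw [← ENNReal.ofReal_add hR.le hR.le]; ring_nf
    have hL : pathLength γ < ENNReal.ofReal (2 * R + ε) := by
      calc pathLength γ < edist q₁ q₂ + δ' := hγ
        _ ≤ ENNReal.ofReal (2 * R) + ENNReal.ofReal ε :=
            add_le_add hq12 (min_le_right _ _)
        _ = ENNReal.ofReal (2 * R + ε) := by
            rw [ENNReal.ofReal_add (by linarith) hε.le]
    -- the path stays in the big ball
    have hrange : Set.range (fun t => γ t) ⊆ Metric.closedBall p (2 * R + ε) := by
      rintro x ⟨t, rfl⟩
      have h01 : (Set.univ : Set unitInterval) ∩ Set.Icc 0 1 = Set.univ := by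
        ext s
        simp [@unitInterval.nonneg' s, @unitInterval.le_one' s]
      have hsplit : eVariationOn (fun t => γ t) (Set.Icc 0 t)
          + eVariationOn (fun t => γ t) (Set.Icc t 1) = pathLength γ := by
        rw [← Set.univ_inter (Set.Icc 0 t), ← Set.univ_inter (Set.Icc t 1),
          eVariationOn.Icc_add_Icc (fun t => γ t) (unitInterval.nonneg' : (0:unitInterval) ≤ t)
          (unitInterval.le_one' : t ≤ 1) (Set.mem_univ t), h01, pathLength]
      set a := eVariationOn (fun t => γ t) (Set.Icc 0 t)
      set b := eVariationOn (fun t => γ t) (Set.Icc t 1)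
      have ha : edist (γ t) q₁ ≤ a := by
        have := eVariationOn.edist_le (fun t => γ t)
          (x := t) (y := 0) (s := Set.Icc 0 t)
          ⟨unitInterval.nonneg', le_refl t⟩ ⟨le_refl 0, unitInterval.nonneg'⟩
        simpa using this
      have hb : edist (γ t) q₂ ≤ b := by
        have := eVariationOn.edist_le (fun t => γ t)
          (x := t) (y := 1) (s := Set.Icc t 1)
          ⟨le_refl t, unitInterval.le_one'⟩ ⟨unitInterval.le_one', le_refl 1⟩
        simpa using this
      have hmin : min a b < ENNReal.ofReal (R + ε / 2) := by
        have h2 : min a b + min a b ≤ a + b :=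
          add_le_add (min_le_left _ _) (min_le_right _ _)
        have : min a b + min a b < ENNReal.ofReal (R + ε / 2) + ENNReal.ofReal (R + ε / 2) := by
          calc min a b + min a b ≤ a + b := h2
            _ = pathLength γ := hsplit
            _ < ENNReal.ofReal (2 * R + ε) := hL
            _ = ENNReal.ofReal (R + ε / 2) + ENNReal.ofReal (R + ε / 2) := by
                rw [← ENNReal.ofReal_add (by linarith) (by linarith)]; ring_nf
        by_contra h
        push_neg at h
        exact absurd this (not_lt.2 (add_le_add h h))
      have hdist : edist (γ t) p ≤ ENNReal.ofReal (2 * R + ε) := by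
        rcases min_cases a b with ⟨hm, _⟩ | ⟨hm, _⟩
        · calc edist (γ t) p ≤ edist (γ t) q₁ + edist q₁ p := edist_triangle _ _ _
            _ ≤ ENNReal.ofReal (R + ε / 2) + ENNReal.ofReal R := by
                gcongr
                · exact ha.trans (hm ▸ hmin.le)
                · exact (edist_le_ofReal hR.le).2 h₁
            _ ≤ ENNReal.ofReal (2 * R + ε) := by
                rw [← ENNReal.ofReal_add (by linarith) hR.le]
                exact ENNReal.ofReal_le_ofReal (by linarith)
        · calc edist (γ t) p ≤ edist (γ t) q₂ + edist q₂ p := edist_triangle _ _ _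
            _ ≤ ENNReal.ofReal (R + ε / 2) + ENNReal.ofReal R := by
                gcongr
                · exact hb.trans (hm ▸ hmin.le)
                · exact (edist_le_ofReal hR.le).2 h₂
            _ ≤ ENNReal.ofReal (2 * R + ε) := by
                rw [← ENNReal.ofReal_add (by linarith) hR.le]
                exact ENNReal.ofReal_le_ofReal (by linarith)
      exact (edist_le_ofReal hRe).1 hdist
    calc intrinsicEDist (Metric.closedBall p (2 * R + ε)) q₁ q₂
        ≤ pathLength γ := iInf₂_le γ hrange
      _ ≤ edist q₁ q₂ + δ' := hγ.le
      _ ≤ edist q₁ q₂ + δ := add_le_add_right (min_le_left _ _) _
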